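/- Let K be a convex subset of ℝ^d with nonempty interior and let E be a measurable subset of K with 0 < λ(E) < λ(K). Then for every s ∈ (0,1) there exists a cube W contained in K such that λ(W ∩ E) = s·λ(W). -/

import Mathlib

open MeasureTheory Set Metric Filter

section aux

lemma aux_annulus' {d : ℕ} (x : Fin d → ℝ) (ρ R : ℝ) (h0 : 0 < ρ) (hρR : ρ ≤ R)
    (S : Set (Fin d → ℝ))
    (hsub : S ⊆ closedBall x R \ ball x ρ) :
    (volume S).toReal ≤ (2*R)^d - (2*ρ)^d := by
  have hd : Disjoint S (ball x ρ) :=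
    disjoint_left.2 fun z hz => (hsub hz).2
  have hu : volume S + volume (ball x ρ) ≤ volume (closedBall x R) := by
    rw [← measure_union hd measurableSet_ball]
    refine measure_mono (union_subset (fun z hz => (hsub hz).1)
      ((ball_subset_closedBall).trans (closedBall_subset_closedBall hρR)))
  rw [Real.volume_pi_ball _ h0, Real.volume_pi_closedBall _ (h0.le.trans hρR),
    Fintype.card_fin] at hu
  have hS' : volume S ≤ ENNReal.ofReal ((2*R)^d - (2*ρ)^d) := by
    rw [ENNReal.ofReal_sub _ (by positivity)]
    exact ENNReal.le_sub_of_add_le_right (by simp) hu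
  exact ENNReal.toReal_le_of_le_ofReal (by
    have : (2*ρ)^d ≤ (2*R)^d := pow_le_pow_left₀ (by positivity) (by linarith) d
    linarith) hS'

lemma aux_abs' {α : Type*} [MeasurableSpace α] {μ : Measure α} {A B E : Set α}
    (hA : μ A ≠ ⊤) (hB : μ B ≠ ⊤) :
    |(μ (A ∩ E)).toReal - (μ (B ∩ E)).toReal| ≤ (μ (A \ B)).toReal + (μ (B \ A)).toReal := by
  have key : ∀ X Y : Set α, μ Y ≠ ⊤ → μ (X \ Y) ≠ ⊤ →
      (μ (X ∩ E)).toReal ≤ (μ (Y ∩ E)).toReal + (μ (X \ Y)).toReal := by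
    intro X Y hY hXY
    rw [← ENNReal.toReal_add (ne_top_of_le_ne_top hY (measure_mono inter_subset_left)) hXY]
    refine ENNReal.toReal_mono (ENNReal.add_ne_top.2
      ⟨ne_top_of_le_ne_top hY (measure_mono inter_subset_left), hXY⟩) ?_
    refine le_trans (measure_mono ?_) (measure_union_le _ _)
    intro z hz
    by_cases h : z ∈ Y
    · exact Or.inl ⟨h, hz.2⟩
    · exact Or.inr ⟨hz.1, h⟩
  have h1 := key A B hB (ne_top_of_le_ne_top hA (measure_mono diff_subset))
  have h2 := key B A hA (ne_top_of_le_ne_top hB (measure_mono diff_subset))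
  rw [abs_sub_le_iff]
  constructor
  · linarith [ENNReal.toReal_nonneg (a := μ (B \ A))]
  · linarith [ENNReal.toReal_nonneg (a := μ (A \ B))]

lemma aux_cont' {d : ℕ} (E : Set (Fin d → ℝ)) (p : ℝ → Fin d → ℝ) (r : ℝ → ℝ)
    (hp : Continuous p) (hr : Continuous r) (t : ℝ) (hrt : 0 < r t) :
    ContinuousAt (fun u => (volume (closedBall (p u) (r u) ∩ E)).toReal) t := by
  set f : ℝ → ℝ := fun u => (volume (closedBall (p u) (r u) ∩ E)).toReal with hf
  rw [ContinuousAt, tendsto_iff_dist_tendsto_zero]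
  set δ : ℝ → ℝ := fun u => dist (p u) (p t) + |r u - r t| with hδdef
  have hδc : Continuous δ := by
    apply Continuous.add
    · exact (hp.dist continuous_const)
    · exact (hr.sub continuous_const).abs
  have hδ0 : δ t = 0 := by simp [hδdef]
  have hδnn : ∀ u, 0 ≤ δ u := fun u => add_nonneg dist_nonneg (abs_nonneg _)
  set g : ℝ → ℝ := fun u => 2*((2*(r t + δ u))^d - (2*(r t - δ u))^d) with hg
  have hgt : Filter.Tendsto g (nhds t) (nhds 0) := by
    have hgc : Continuous g := by
      apply continuous_const.mul
      exact ((continuous_const.mul ((continuous_const.add hδc))).pow d).sub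
        ((continuous_const.mul ((continuous_const.sub hδc))).pow d)
    have := hgc.tendsto t
    simpa [hg, hδ0] using this
  refine squeeze_zero' (Filter.Eventually.of_forall fun u => dist_nonneg) ?_ hgt
  have hev : ∀ᶠ u in nhds t, δ u < r t := by
    have := hδc.tendsto t
    rw [hδ0] at this
    exact this.eventually (eventually_lt_nhds hrt)
  filter_upwards [hev] with u hu
  have hδeq : δ u = dist (p u) (p t) + |r u - r t| := rfl
  have hδu : 0 ≤ δ u := hδnn u
  set ρ := r t - δ u with hρ
  set R := r t + δ u with hR
  have hρ0 : 0 < ρ := by rw [hρ]; linarith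
  have hρR : ρ ≤ R := by rw [hρ, hR]; linarith
  have hAfin : volume (closedBall (p u) (r u)) ≠ ⊤ := measure_closedBall_lt_top.ne
  have hBfin : volume (closedBall (p t) (r t)) ≠ ⊤ := measure_closedBall_lt_top.ne
  have hdd : dist (p u) (p t) ≤ δ u := by
    rw [hδeq]; exact le_add_of_nonneg_right (abs_nonneg _)
  have har1 : r u - r t ≤ |r u - r t| := le_abs_self _
  have har2 : r t - r u ≤ |r u - r t| := by rw [abs_sub_comm]; exact le_abs_self _
  have hard : |r u - r t| ≤ δ u := by
    rw [hδeq]; exact le_add_of_nonneg_left dist_nonneg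
  have hsub1 : closedBall (p u) (r u) \ closedBall (p t) (r t)
      ⊆ closedBall (p t) R \ ball (p t) ρ := by
    rintro z ⟨hz1, hz2⟩
    rw [mem_closedBall] at hz1
    rw [mem_closedBall, not_le] at hz2
    have ht1 := dist_triangle z (p u) (p t)
    constructor
    · rw [mem_closedBall, hR]; linarith
    · rw [mem_ball, not_lt, hρ]; linarith
  have hsub2 : closedBall (p t) (r t) \ closedBall (p u) (r u)
      ⊆ closedBall (p t) R \ ball (p t) ρ := by
    rintro z ⟨hz1, hz2⟩
    rw [mem_closedBall] at hz1
    rw [mem_closedBall, not_le] at hz2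
    have ht2 := dist_triangle z (p t) (p u)
    have hcm : dist (p t) (p u) = dist (p u) (p t) := dist_comm _ _
    constructor
    · rw [mem_closedBall, hR]; linarith
    · rw [mem_ball, not_lt, hρ]; linarith
  have b1 := aux_annulus' (p t) ρ R hρ0 hρR _ hsub1
  have b2 := aux_annulus' (p t) ρ R hρ0 hρR _ hsub2
  have habs := aux_abs' (μ := volume) (A := closedBall (p u) (r u))
    (B := closedBall (p t) (r t)) (E := E) hAfin hBfin
  rw [Real.dist_eq]
  simp only [hf, hg]
  calc |(volume (closedBall (p u) (r u) ∩ E)).toReal -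
      (volume (closedBall (p t) (r t) ∩ E)).toReal| ≤ _ := habs
    _ ≤ ((2*R)^d - (2*ρ)^d) + ((2*R)^d - (2*ρ)^d) := add_le_add b1 b2
    _ = 2*((2*(r t + δ u))^d - (2*(r t - δ u))^d) := by rw [hρ, hR]; ring

lemma aux_density' {d : ℕ} (A : Set (Fin d → ℝ)) (hA : MeasurableSet A)
    (hpos : 0 < volume A) (U : Set (Fin d → ℝ)) (hU : IsOpen U)
    (hAU : volume (A \ U) = 0) (c : ENNReal) (hc : c < 1) :
    ∃ (x : Fin d → ℝ) (r : ℝ), 0 < r ∧ closedBall x r ⊆ U ∧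
      c * volume (closedBall x r) < volume (A ∩ closedBall x r) := by
  have h1 := Besicovitch.ae_tendsto_measure_inter_div (volume : Measure (Fin d → ℝ)) A
  have h2 : ∀ᵐ x ∂(volume.restrict A), x ∈ U := by
    rw [ae_iff, Measure.restrict_apply₀' hA.nullMeasurableSet]
    refine measure_mono_null ?_ hAU
    intro z hz
    exact ⟨hz.2, hz.1⟩
  have hne : (ae (volume.restrict A)).NeBot := by
    rw [ae_neBot]
    intro h
    rw [← Measure.restrict_apply_univ A, h] at hpos
    simp at hpos
  obtain ⟨x, hx, hxU⟩ := (h1.and h2).exists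
  have hev1 : ∀ᶠ r in nhdsWithin 0 (Ioi (0:ℝ)),
      c < volume (A ∩ closedBall x r) / volume (closedBall x r) :=
    hx.eventually (eventually_gt_nhds hc)
  obtain ⟨ε, hε, hball⟩ := Metric.isOpen_iff.1 hU x hxU
  have hev2 : ∀ᶠ r in nhdsWithin 0 (Ioi (0:ℝ)), r ∈ Ioo (0:ℝ) ε :=
    Ioo_mem_nhdsGT_of_mem ⟨le_refl 0, hε⟩
  obtain ⟨r, hr1, hr2⟩ := (hev1.and hev2).exists
  refine ⟨x, r, hr2.1, (closedBall_subset_ball hr2.2).trans hball, ?_⟩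
  have hvol : volume (closedBall x r) = ENNReal.ofReal ((2*r)^d) := by
    rw [Real.volume_pi_closedBall _ hr2.1.le, Fintype.card_fin]
  have hvne : volume (closedBall x r) ≠ 0 := by
    rw [hvol]; simp only [ne_eq, ENNReal.ofReal_eq_zero, not_le]
    exact pow_pos (by linarith [hr2.1]) d
  have hvnt : volume (closedBall x r) ≠ ⊤ := by rw [hvol]; exact ENNReal.ofReal_ne_top
  rwa [ENNReal.lt_div_iff_mul_lt (Or.inl hvne) (Or.inl hvnt)] at hr1

end aux

/-- A closed axis-parallel cube in `ℝ^d` with positive side length. -/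
def IsCube {d : ℕ} (Q : Set (Fin d → ℝ)) : Prop :=
  ∃ (a : Fin d → ℝ) (r : ℝ), 0 < r ∧ Q = Set.univ.pi fun i => Set.Icc (a i) (a i + r)

theorem stmt16 {d : ℕ} (K : Set (Fin d → ℝ)) (hK : Convex ℝ K)
    (hKi : (interior K).Nonempty)
    (E : Set (Fin d → ℝ)) (hE : MeasurableSet E) (hEK : E ⊆ K)
    (h1 : 0 < volume E) (h2 : volume E < volume K)
    (s : ℝ) (hs : s ∈ Set.Ioo (0:ℝ) 1) :
    ∃ W : Set (Fin d → ℝ), IsCube W ∧ W ⊆ K ∧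
      volume (W ∩ E) = ENNReal.ofReal s * volume W := by
  obtain ⟨hs0, hs1⟩ := hs
  have hfr : volume (frontier K) = 0 := hK.addHaar_frontier volume
  have hKint : volume (K \ interior K) = 0 :=
    measure_mono_null (by
      intro z hz
      rw [← closure_diff_interior]
      exact ⟨subset_closure hz.1, hz.2⟩) hfr
  have hEint : volume (E \ interior K) = 0 :=
    measure_mono_null (diff_subset_diff_left hEK) hKint
  -- first cube: high density of E
  obtain ⟨x₀, r₀, hr₀, hC₀K, hd₀⟩ := aux_density' E hE h1 (interior K) isOpen_interior
    hEint (ENNReal.ofReal s) (by rw [ENNReal.ofReal_lt_one]; exact hs1)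
  -- second cube: low density of E
  set E' := interior K \ E with hE'def
  have hE'm : MeasurableSet E' := isOpen_interior.measurableSet.diff hE
  have hE'pos : 0 < volume E' := by
    rcases eq_or_lt_of_le (zero_le : 0 ≤ volume E') with h0 | h0
    · exfalso
      have hKE : volume K ≤ volume E := by
        calc volume K ≤ volume (interior K ∪ (K \ interior K)) := by
              refine measure_mono fun z hz => ?_
              by_cases h : z ∈ interior K
              · exact Or.inl h
              · exact Or.inr ⟨hz, h⟩
          _ ≤ volume (interior K) + volume (K \ interior K) := measure_union_le _ _
          _ = volume (interior K) := by rw [hKint, add_zero]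
          _ ≤ volume (E ∪ E') := by
              refine measure_mono fun z hz => ?_
              by_cases h : z ∈ E
              · exact Or.inl h
              · exact Or.inr ⟨hz, h⟩
          _ ≤ volume E + volume E' := measure_union_le _ _
          _ = volume E := by rw [← h0, add_zero]
      exact absurd h2 (not_lt.2 hKE)
    · exact h0
  have hE'U : volume (E' \ interior K) = 0 := by
    have : E' \ interior K = ∅ := diff_eq_empty.2 diff_subset
    rw [this, measure_empty]
  obtain ⟨x₁, r₁, hr₁, hC₁K, hd₁⟩ := aux_density' E' hE'm hE'pos (interior K)
    isOpen_interior hE'U (ENNReal.ofReal (1 - s)) (by rw [ENNReal.ofReal_lt_one]; linarith)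
  -- the path of cubes
  set p : ℝ → (Fin d → ℝ) := fun t => x₀ + t • (x₁ - x₀) with hpdef
  set r : ℝ → ℝ := fun t => r₀ + t * (r₁ - r₀) with hrdef
  have hp0 : p 0 = x₀ := by simp [hpdef]
  have hp1 : p 1 = x₁ := by simp [hpdef]
  have hr0 : r 0 = r₀ := by simp [hrdef]
  have hr1' : r 1 = r₁ := by simp [hrdef]
  have hpc : Continuous p := by
    apply continuous_const.add
    exact (continuous_id.smul continuous_const)
  have hrc : Continuous r := by
    apply continuous_const.add
    exact (continuous_id.mul continuous_const)
  have hrpos : ∀ t ∈ Icc (0:ℝ) 1, 0 < r t := by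
    intro t ht
    have hre : r t = (1 - t) * r₀ + t * r₁ := by rw [hrdef]; ring
    rcases eq_or_lt_of_le ht.1 with h | h
    · rw [hre, ← h]; simpa using hr₀
    · rw [hre]
      have h1' : 0 ≤ (1 - t) * r₀ := mul_nonneg (by linarith [ht.2]) hr₀.le
      nlinarith
  have hCK : ∀ t ∈ Icc (0:ℝ) 1, closedBall (p t) (r t) ⊆ K := by
    intro t ht z hz
    have hrt := hrpos t ht
    set w : Fin d → ℝ := z - p t with hwdef
    have hw : ‖w‖ ≤ r t := by
      rw [hwdef, ← dist_eq_norm]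
      exact mem_closedBall.1 hz
    have hu : x₀ + (r₀ / r t) • w ∈ closedBall x₀ r₀ := by
      rw [mem_closedBall, dist_eq_norm, add_sub_cancel_left, norm_smul,
        Real.norm_eq_abs, abs_of_nonneg (by positivity)]
      calc r₀ / r t * ‖w‖ ≤ r₀ / r t * r t :=
            mul_le_mul_of_nonneg_left hw (by positivity)
        _ = r₀ := div_mul_cancel₀ _ hrt.ne'
    have hv : x₁ + (r₁ / r t) • w ∈ closedBall x₁ r₁ := by
      rw [mem_closedBall, dist_eq_norm, add_sub_cancel_left, norm_smul,
        Real.norm_eq_abs, abs_of_nonneg (by positivity)]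
      calc r₁ / r t * ‖w‖ ≤ r₁ / r t * r t :=
            mul_le_mul_of_nonneg_left hw (by positivity)
        _ = r₁ := div_mul_cancel₀ _ hrt.ne'
    have hz' : z = (1 - t) • (x₀ + (r₀ / r t) • w) + t • (x₁ + (r₁ / r t) • w) := by
      have hzw : z = p t + w := by rw [hwdef]; abel
      rw [hzw]
      funext i
      simp only [hpdef, Pi.add_apply, Pi.smul_apply, Pi.sub_apply, smul_eq_mul]
      field_simp
      ring
    rw [hz']
    exact hK (interior_subset (hC₀K hu)) (interior_subset (hC₁K hv))
      (by linarith [ht.2]) ht.1 (by ring)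
  -- the density function
  set f : ℝ → ℝ := fun t => (volume (closedBall (p t) (r t) ∩ E)).toReal with hfdef
  set g : ℝ → ℝ := fun t => f t - s * (2 * r t)^d with hgdef
  have hgc : ContinuousOn g (Icc 0 1) := by
    intro t ht
    apply ContinuousWithinAt.sub
    · exact (aux_cont' E p r hpc hrc t (hrpos t ht)).continuousWithinAt
    · exact (continuous_const.mul ((continuous_const.mul hrc).pow d)).continuousWithinAt
  have hvol : ∀ t ∈ Icc (0:ℝ) 1,
      volume (closedBall (p t) (r t)) = ENNReal.ofReal ((2 * r t)^d) := by
    intro t ht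
    rw [Real.volume_pi_closedBall _ (hrpos t ht).le, Fintype.card_fin]
  -- endpoint values
  have hg0 : 0 < g 0 := by
    have hC := hd₀
    have hfin : volume (E ∩ closedBall x₀ r₀) ≠ ⊤ :=
      ne_top_of_le_ne_top measure_closedBall_lt_top.ne (measure_mono inter_subset_right)
    have hv0 : volume (closedBall x₀ r₀) = ENNReal.ofReal ((2 * r₀)^d) := by
      rw [Real.volume_pi_closedBall _ hr₀.le, Fintype.card_fin]
    have := ENNReal.toReal_lt_toReal (by
        rw [hv0]
        exact ENNReal.mul_ne_top ENNReal.ofReal_ne_top ENNReal.ofReal_ne_top) hfin |>.2 hC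
    rw [hv0, ← ENNReal.ofReal_mul hs0.le, ENNReal.toReal_ofReal
      (mul_nonneg hs0.le (by positivity))] at this
    have hfeq : f 0 = (volume (E ∩ closedBall x₀ r₀)).toReal := by
      rw [hfdef]
      simp only [hp0, hr0, inter_comm]
    rw [hgdef]
    simp only [hfeq, hr0]
    linarith
  have hg1 : g 1 < 0 := by
    set a := (volume (E ∩ closedBall x₁ r₁)).toReal with hadef
    set b := (volume (E' ∩ closedBall x₁ r₁)).toReal with hbdef
    have hfinC : volume (closedBall x₁ r₁) ≠ ⊤ := measure_closedBall_lt_top.ne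
    have hfina : volume (E ∩ closedBall x₁ r₁) ≠ ⊤ :=
      ne_top_of_le_ne_top hfinC (measure_mono inter_subset_right)
    have hfinb : volume (E' ∩ closedBall x₁ r₁) ≠ ⊤ :=
      ne_top_of_le_ne_top hfinC (measure_mono inter_subset_right)
    have hv1 : volume (closedBall x₁ r₁) = ENNReal.ofReal ((2 * r₁)^d) := by
      rw [Real.volume_pi_closedBall _ hr₁.le, Fintype.card_fin]
    have hb : (1 - s) * (2 * r₁)^d < b := by
      have := ENNReal.toReal_lt_toReal (by
          rw [hv1]
          exact ENNReal.mul_ne_top ENNReal.ofReal_ne_top ENNReal.ofReal_ne_top) hfinb |>.2 hd₁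
      rwa [hv1, ← ENNReal.ofReal_mul (by linarith), ENNReal.toReal_ofReal
        (mul_nonneg (by linarith) (by positivity))] at this
    have hab : a + b ≤ (2 * r₁)^d := by
      have hdisj : Disjoint (E ∩ closedBall x₁ r₁) (E' ∩ closedBall x₁ r₁) := by
        refine Disjoint.mono inter_subset_left inter_subset_left ?_
        exact disjoint_left.2 fun z hz hz' => hz'.2 hz
      have hun : volume (E ∩ closedBall x₁ r₁) + volume (E' ∩ closedBall x₁ r₁)
          ≤ volume (closedBall x₁ r₁) := by
        rw [← measure_union hdisj (hE'm.inter measurableSet_closedBall)]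
        exact measure_mono (union_subset inter_subset_right inter_subset_right)
      rw [hv1] at hun
      have := ENNReal.toReal_mono ENNReal.ofReal_ne_top hun
      rwa [ENNReal.toReal_add hfina hfinb, ENNReal.toReal_ofReal (by positivity)] at this
    have hfeq : f 1 = a := by
      rw [hfdef, hadef]
      simp only [hp1, hr1', inter_comm]
    rw [hgdef]
    simp only [hfeq, hr1']
    linarith
  -- intermediate value theorem
  have hiv : (0:ℝ) ∈ g '' (Icc 0 1) := by
    apply intermediate_value_Icc' zero_le_one hgc
    exact ⟨hg1.le, hg0.le⟩
  obtain ⟨t, ht, hgt⟩ := hiv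
  refine ⟨closedBall (p t) (r t), ?_, hCK t ht, ?_⟩
  · refine ⟨fun i => p t i - r t, 2 * r t, by linarith [hrpos t ht], ?_⟩
    rw [closedBall_pi _ (hrpos t ht).le]
    apply Set.pi_congr rfl
    intro i _
    rw [Real.closedBall_eq_Icc]
    congr 1
    ring
  · have hfin : volume (closedBall (p t) (r t) ∩ E) ≠ ⊤ :=
      ne_top_of_le_ne_top measure_closedBall_lt_top.ne (measure_mono inter_subset_left)
    have heq : f t = s * (2 * r t)^d := by
      have : g t = 0 := hgt
      rw [hgdef] at this
      simp only at this
      linarith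
    rw [← ENNReal.ofReal_toReal hfin]
    have : (volume (closedBall (p t) (r t) ∩ E)).toReal = f t := by rw [hfdef]
    rw [this, heq, hvol t ht, ENNReal.ofReal_mul hs0.le]
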